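/- Fix a real constant α and a real constant b > 0. The function G(w, w̄, v) := e^{v sin α} · (w w̄)/b + 4 e^{−v sin α} · b/(1 + 3 sin²α) satisfies equation (alterform) at every point of ℂ × ℝ. -/

import Mathlib

noncomputable section

/-- Wirtinger derivative ∂_w of a complex-valued function of (w, v) ∈ ℂ × ℝ. -/
def dw (G : ℂ → ℝ → ℂ) : ℂ → ℝ → ℂ := fun w v =>
  ((fderiv ℝ (fun z => G z v) w 1) - Complex.I * (fderiv ℝ (fun z => G z v) w Complex.I)) / 2

/-- Wirtinger derivative ∂_{w̄} of a complex-valued function of (w, v) ∈ ℂ × ℝ. -/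
def dwb (G : ℂ → ℝ → ℂ) : ℂ → ℝ → ℂ := fun w v =>
  ((fderiv ℝ (fun z => G z v) w 1) + Complex.I * (fderiv ℝ (fun z => G z v) w Complex.I)) / 2

/-- Partial derivative ∂_v of a complex-valued function of (w, v) ∈ ℂ × ℝ. -/
def dv (G : ℂ → ℝ → ℂ) : ℂ → ℝ → ℂ := fun w v => deriv (fun t => G w t) v

/-- A real-valued function of (w, v), viewed as complex-valued. -/
def cx (G : ℂ → ℝ → ℝ) : ℂ → ℝ → ℂ := fun w v => (G w v : ℂ)

/-- the family of functions we differentiate -/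
def FF (s p q : ℝ) : ℂ → ℝ → ℝ := fun z t =>
  p * Real.exp (t * s) * Complex.normSq z + q * Real.exp (-(t * s))

lemma hasFDerivAt_FF (s p q : ℝ) (v : ℝ) (w : ℂ) :
    HasFDerivAt (fun z => cx (FF s p q) z v)
      (((p * Real.exp (v * s) : ℝ) : ℂ) •
        (w • (Complex.conjCLE.toContinuousLinearMap) +
          (ContinuousLinearMap.id ℝ ℂ).smulRight ((starRingEnd ℂ) w))) w := by
  have hn : HasFDerivAt (fun z : ℂ => z * (starRingEnd ℂ) z)
      (w • (Complex.conjCLE.toContinuousLinearMap) +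
        (ContinuousLinearMap.id ℝ ℂ).smulRight ((starRingEnd ℂ) w)) w := by
    have h1 : HasFDerivAt (fun z : ℂ => z) (ContinuousLinearMap.id ℝ ℂ) w := hasFDerivAt_id w
    have h2 : HasFDerivAt (fun z : ℂ => (starRingEnd ℂ) z) Complex.conjCLE.toContinuousLinearMap w :=
      Complex.conjCLE.toContinuousLinearMap.hasFDerivAt
    exact (h1.mul' h2).congr_fderiv (ContinuousLinearMap.ext fun x => by simp [mul_comm])
  have h := (hn.const_mul ((p * Real.exp (v * s) : ℝ) : ℂ)).add_const
      ((q * Real.exp (-(v * s)) : ℝ) : ℂ)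
  have hfun : (fun z => cx (FF s p q) z v)
      = fun z : ℂ => ((p * Real.exp (v * s) : ℝ) : ℂ) * (z * (starRingEnd ℂ) z)
          + ((q * Real.exp (-(v * s)) : ℝ) : ℂ) := by
    funext z
    simp only [cx, FF]
    push_cast
    rw [Complex.mul_conj]
  rw [hfun]
  convert h using 1

lemma dw_FF (s p q : ℝ) (w : ℂ) (v : ℝ) :
    dw (cx (FF s p q)) w v = ((p * Real.exp (v * s) : ℝ) : ℂ) * (starRingEnd ℂ) w := by
  have h := (hasFDerivAt_FF s p q v w).fderiv
  simp only [dw, h]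
  simp [Complex.conjCLE_apply, smul_eq_mul]
  ring_nf
  simp [Complex.I_sq]
  ring

lemma dwb_FF (s p q : ℝ) (w : ℂ) (v : ℝ) :
    dwb (cx (FF s p q)) w v = ((p * Real.exp (v * s) : ℝ) : ℂ) * w := by
  have h := (hasFDerivAt_FF s p q v w).fderiv
  simp only [dwb, h]
  simp [Complex.conjCLE_apply, smul_eq_mul]
  ring_nf
  simp [Complex.I_sq]
  ring

lemma dv_FF (s p q : ℝ) :
    dv (cx (FF s p q)) = cx (FF s (s * p) (-(s * q))) := by
  funext w v
  have h1 : HasDerivAt (fun t : ℝ => FF s p q w t)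
      (p * (Real.exp (v * s) * (1 * s)) * Complex.normSq w
        + q * (Real.exp (-(v * s)) * -(1 * s))) v := by
    have he : HasDerivAt (fun t : ℝ => Real.exp (t * s)) (Real.exp (v * s) * (1 * s)) v :=
      ((hasDerivAt_id v).mul_const s).exp
    have he' : HasDerivAt (fun t : ℝ => Real.exp (-(t * s))) (Real.exp (-(v * s)) * -(1 * s)) v :=
      (((hasDerivAt_id v).mul_const s).neg).exp
    exact ((he.const_mul p).mul_const (Complex.normSq w)).add (he'.const_mul q)
  have h2 := h1.ofReal_comp
  have := h2.deriv
  simp only [dv, cx]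
  rw [this]
  simp only [FF]
  push_cast
  ring

lemma dwb_dw_FF (s p q : ℝ) (w : ℂ) (v : ℝ) :
    dwb (dw (cx (FF s p q))) w v = ((p * Real.exp (v * s) : ℝ) : ℂ) := by
  have hfun : (fun z => dw (cx (FF s p q)) z v)
      = fun z : ℂ => ((p * Real.exp (v * s) : ℝ) : ℂ) * (starRingEnd ℂ) z := by
    funext z; exact dw_FF s p q z v
  have hd : HasFDerivAt (fun z : ℂ => ((p * Real.exp (v * s) : ℝ) : ℂ) * (starRingEnd ℂ) z)
      (((p * Real.exp (v * s) : ℝ) : ℂ) • Complex.conjCLE.toContinuousLinearMap) w := by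
    have h2 : HasFDerivAt (fun z : ℂ => (starRingEnd ℂ) z) Complex.conjCLE.toContinuousLinearMap w :=
      Complex.conjCLE.toContinuousLinearMap.hasFDerivAt
    exact h2.const_mul _
  simp only [dwb, hfun, hd.fderiv]
  simp [Complex.conjCLE_apply, smul_eq_mul]
  ring_nf
  simp [Complex.I_sq]
  ring


/-- Equation (alterform) at the point (w, v):
(G + G_{vv} − 2 G_v sin α) G_{ww̄}
  − (e^{iα} G_{w̄} − i G_{vw̄})(e^{−iα} G_w + i G_{vw}) = 4. -/
def Alterform (α : ℝ) (G : ℂ → ℝ → ℝ) (w : ℂ) (v : ℝ) : Prop :=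
  (cx G w v + dv (dv (cx G)) w v - 2 * dv (cx G) w v * (Real.sin α : ℂ))
      * dwb (dw (cx G)) w v
    - (Complex.exp (Complex.I * (α : ℂ)) * dwb (cx G) w v
        - Complex.I * dwb (dv (cx G)) w v)
      * (Complex.exp (-(Complex.I * (α : ℂ))) * dw (cx G) w v
        + Complex.I * dw (dv (cx G)) w v)
    = 4

/-- For b > 0, the function
G(w, w̄, v) = e^{v sin α} w w̄ / b + 4 e^{−v sin α} b/(1 + 3 sin²α)
satisfies (alterform) everywhere on ℂ × ℝ. -/
theorem alterform_explicit_solution (α : ℝ) (b : ℝ) (hb : 0 < b) :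
    ∀ w : ℂ, ∀ v : ℝ, Alterform α
      (fun z t => Real.exp (t * Real.sin α) * Complex.normSq z / b
        + 4 * Real.exp (-(t * Real.sin α)) * b / (1 + 3 * Real.sin α ^ 2)) w v := by
  intro w v
  have hG : (fun z t => Real.exp (t * Real.sin α) * Complex.normSq z / b
        + 4 * Real.exp (-(t * Real.sin α)) * b / (1 + 3 * Real.sin α ^ 2))
      = FF (Real.sin α) (1 / b) (4 * b / (1 + 3 * Real.sin α ^ 2)) := by
    funext z t; simp only [FF]; ring
  rw [hG]
  unfold Alterform
  rw [dv_FF, dv_FF, dw_FF, dw_FF, dwb_FF, dwb_FF, dwb_dw_FF]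
  simp only [cx, FF]
  have hE : ((Real.exp (v * Real.sin α) : ℝ) : ℂ) * ((Real.exp (-(v * Real.sin α)) : ℝ) : ℂ) = 1 := by
    rw [← Complex.ofReal_mul, ← Real.exp_add]; simp
  have hexp1 : Complex.exp (Complex.I * (α : ℂ)) = Complex.cos α + Complex.sin α * Complex.I := by
    rw [mul_comm, Complex.exp_mul_I]
  have hexp2 : Complex.exp (-(Complex.I * (α : ℂ))) = Complex.cos α - Complex.sin α * Complex.I := by
    rw [show -(Complex.I * (α : ℂ)) = (-(α : ℂ)) * Complex.I by ring, Complex.exp_mul_I,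
      Complex.cos_neg, Complex.sin_neg]; ring
  have hpyth : Complex.sin (α : ℂ) ^ 2 + Complex.cos (α : ℂ) ^ 2 = 1 :=
    Complex.sin_sq_add_cos_sq _
  have hmc : ((Complex.normSq w : ℝ) : ℂ) = w * (starRingEnd ℂ) w := (Complex.mul_conj w).symm
  have hb' : (b : ℂ) ≠ 0 := Complex.ofReal_ne_zero.mpr hb.ne'
  have hK : ((1 + 3 * Real.sin α ^ 2 : ℝ) : ℂ) ≠ 0 := by
    refine Complex.ofReal_ne_zero.mpr ?_
    positivity
  rw [hexp1, hexp2]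
  push_cast [hmc] at *
  have hK2 : 1 + Complex.sin (α:ℂ) ^ 2 * 3 ≠ 0 := by convert hK using 1; ring
  field_simp
  linear_combination (-(w * (starRingEnd ℂ) w) * Complex.exp ((v:ℂ) * Complex.sin (α:ℂ)) ^ 2
      * (1 + 3 * Complex.sin (α:ℂ) ^ 2)) * hpyth
    + (4 * (b : ℂ) ^ 2 * (1 + 3 * Complex.sin (α:ℂ) ^ 2)) * hE


end
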